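/- Let G be a multigraph, f a divisor on G, and k ≥ 1 an integer. If there is a legal game starting from f in which every vertex fires exactly k times, then there is a legal game starting from f in which every vertex fires exactly once. -/

import Mathlib

variable {V : Type*} [Fintype V] [DecidableEq V]

/-- The degree of vertex `v` in the multigraph with edge-multiplicity function `m`. -/
def mgDeg (m : V → V → ℕ) (v : V) : ℕ := ∑ u, m v u

/-- The divisor obtained from `f` by firing vertex `v`. -/
def mgFire (m : V → V → ℕ) (f : V → ℤ) (v : V) : V → ℤ :=
  fun u => if u = v then f v - mgDeg m v else f u + m v u

/-- The divisor obtained from `f` by firing the vertices of `L` in order. -/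
def mgPlay (m : V → V → ℕ) (f : V → ℤ) (L : List V) : V → ℤ :=
  L.foldl (mgFire m) f

/-- `L` is a legal game from `f`: each fired vertex is active when fired. -/
def mgLegal (m : V → V → ℕ) : (V → ℤ) → List V → Prop
  | _, [] => True
  | f, v :: L => ((mgDeg m v : ℤ) ≤ f v) ∧ mgLegal m (mgFire m f v) L

/-- A divisor is stable if no vertex is active. -/
def mgStable (m : V → V → ℕ) (f : V → ℤ) : Prop := ∀ v, f v < (mgDeg m v : ℤ)

/-- A divisor is halting if some legal game from it ends at a stable divisor. -/
def mgHalting (m : V → V → ℕ) (f : V → ℤ) : Prop :=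
  ∃ L : List V, mgLegal m f L ∧ mgStable m (mgPlay m f L)

/-- A divisor is recurrent if some non-empty legal game from it leads back to it. -/
def mgRecurrent (m : V → V → ℕ) (f : V → ℤ) : Prop :=
  ∃ L : List V, L ≠ [] ∧ mgLegal m f L ∧ mgPlay m f L = f

/-- A divisor is effective if it is nonnegative everywhere. -/
def mgEffective (f : V → ℤ) : Prop := ∀ v, 0 ≤ f v

/-- The degree of a divisor. -/
def mgDegDiv (f : V → ℤ) : ℤ := ∑ v, f v

/-- Distance of a divisor from a recurrent state. -/
noncomputable def mgDistRec (m : V → V → ℕ) (f : V → ℤ) : ℕ :=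
  sInf {n : ℕ | ∃ g : V → ℤ, mgEffective g ∧ mgDegDiv g = (n : ℤ) ∧ mgRecurrent m (f + g)}

/-- Distance of a divisor from a non-halting state. -/
noncomputable def mgDistNonhalt (m : V → V → ℕ) (f : V → ℤ) : ℕ :=
  sInf {n : ℕ | ∃ g : V → ℤ, mgEffective g ∧ mgDegDiv g = (n : ℤ) ∧ ¬ mgHalting m (f + g)}

/-- A multigraph is connected if any two vertices are joined by a path of
positive-multiplicity edges. -/
def mgConnected (m : V → V → ℕ) : Prop :=
  ∀ u v : V, Relation.ReflTransGen (fun a b => 0 < m a b) u v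

/-- `f` and `g` are linearly equivalent: `f` can be transformed to `g` by firings. -/
def mgLinEquiv (m : V → V → ℕ) (f g : V → ℤ) : Prop :=
  ∃ L : List V, mgPlay m f L = g

/-- A divisor is winnable if it is linearly equivalent to an effective divisor. -/
def mgWinnable (m : V → V → ℕ) (f : V → ℤ) : Prop :=
  ∃ g : V → ℤ, mgEffective g ∧ mgLinEquiv m f g

/-- The rank of a divisor. -/
noncomputable def mgRank (m : V → V → ℕ) (f : V → ℤ) : ℤ :=
  ((sInf {n : ℕ | ∃ g : V → ℤ, mgEffective g ∧ mgDegDiv g = (n : ℤ) ∧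
    ¬ mgWinnable m (f - g)} : ℕ) : ℤ) - 1

lemma mgPlay_cons (m : V → V → ℕ) (f : V → ℤ) (x : V) (T : List V) :
    mgPlay m f (x :: T) = mgPlay m (mgFire m f x) T := rfl

lemma mgPlay_apply (m : V → V → ℕ) (hloop : ∀ v, m v v = 0) (f : V → ℤ)
    (L : List V) (v : V) :
    mgPlay m f L v
      = f v + ∑ u, (L.count u : ℤ) * m u v - (L.count v : ℤ) * mgDeg m v := by
  induction L generalizing f with
  | nil => simp [mgPlay]
  | cons x T ih =>
    rw [mgPlay_cons, ih]
    have hsum : ∑ u, ((x :: T).count u : ℤ) * m u v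
        = (∑ u, (T.count u : ℤ) * m u v) + m x v := by
      have : ∀ u : V, ((x :: T).count u : ℤ) * m u v
          = (T.count u : ℤ) * m u v + (if u = x then (m u v : ℤ) else 0) := by
        intro u
        rcases eq_or_ne u x with h | h
        · subst h; simp [List.count_cons]; ring
        · simp [List.count_cons, h, Ne.symm h]
      rw [Finset.sum_congr rfl (fun u _ => this u), Finset.sum_add_distrib,
        Finset.sum_ite_eq' Finset.univ x (fun u => (m u v : ℤ))]
      simp
    rcases eq_or_ne v x with h | h
    · subst h
      have hc : (v :: T).count v = T.count v + 1 := by simp [List.count_cons]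
      rw [hsum, hc]
      simp [mgFire, hloop v]
      push_cast
      ring
    · have hc : (x :: T).count v = T.count v := by simp [List.count_cons, h, Ne.symm h]
      rw [hsum, hc]
      simp [mgFire, h]
      ring

lemma mgLegal_of_forall_active (m : V → V → ℕ) :
    ∀ (L : List V) (f : V → ℤ),
      (∀ (A : List V) (v : V) (B : List V), L = A ++ v :: B →
        (mgDeg m v : ℤ) ≤ mgPlay m f A v) → mgLegal m f L := by
  intro L
  induction L with
  | nil => intro f _; trivial
  | cons x T ih =>
    intro f h
    refine ⟨?_, ih (mgFire m f x) ?_⟩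
    · have := h [] x T rfl
      simpa [mgPlay] using this
    · intro A v B hAB
      have := h (x :: A) v B (by simp [hAB])
      simpa [mgPlay_cons] using this

lemma mgLegal_split (m : V → V → ℕ) (v : V) (Q : List V) :
    ∀ (P : List V) (f : V → ℤ), mgLegal m f (P ++ v :: Q) →
      (mgDeg m v : ℤ) ≤ mgPlay m f P v := by
  intro P
  induction P with
  | nil => intro f h; exact h.1
  | cons x T ih =>
    intro f h
    exact ih (mgFire m f x) h.2

lemma dedup_decomp : ∀ (L A : List V) (v : V) (B : List V),
    L.dedup = A ++ v :: B → ∃ P Q : List V, L = P ++ v :: Q ∧ v ∉ Q ∧ Q.dedup = B := by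
  intro L
  induction L with
  | nil => intro A v B h; simp at h
  | cons x T ih =>
    intro A v B h
    by_cases hx : x ∈ T
    · rw [List.dedup_cons_of_mem hx] at h
      obtain ⟨P, Q, h1, h2, h3⟩ := ih A v B h
      exact ⟨x :: P, Q, by simp [h1], h2, h3⟩
    · rw [List.dedup_cons_of_notMem hx] at h
      cases A with
      | nil =>
        simp at h
        obtain ⟨h1, h2⟩ := h
        refine ⟨[], T, by simp [h1], by rw [h1] at hx; exact hx, h2⟩
      | cons a A' =>
        simp at h
        obtain ⟨h1, h2⟩ := h
        obtain ⟨P, Q, g1, g2, g3⟩ := ih A' v B h2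
        exact ⟨x :: P, Q, by simp [g1], g2, g3⟩

/-- If there is a legal game from `f` in which every vertex fires exactly `k`
times (`k ≥ 1`), then there is a legal game from `f` in which every vertex fires
exactly once. -/
theorem stmt5 [Nonempty V] (m : V → V → ℕ) (hsymm : ∀ u v, m u v = m v u)
    (hloop : ∀ v, m v v = 0) (f : V → ℤ) (k : ℕ) (hk : 1 ≤ k) (L : List V)
    (hL : mgLegal m f L) (hcount : ∀ v : V, L.count v = k) :
    ∃ L' : List V, mgLegal m f L' ∧ ∀ v : V, L'.count v = 1 := by
  have hmemL : ∀ v : V, v ∈ L := by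
    intro v
    exact List.count_pos_iff.mp (by rw [hcount v]; omega)
  have hmemD : ∀ v : V, v ∈ L.dedup := fun v => List.mem_dedup.mpr (hmemL v)
  refine ⟨L.dedup, ?_, fun v => List.count_eq_one_of_mem L.nodup_dedup (hmemD v)⟩
  apply mgLegal_of_forall_active
  intro A v B hsplit
  obtain ⟨P, Q, h1, h2, h3⟩ := dedup_decomp L A v B hsplit
  -- nodup facts
  have hnd : (A ++ v :: B).Nodup := hsplit ▸ L.nodup_dedup
  have hndA : A.Nodup := hnd.of_append_left
  have hdisj := List.disjoint_of_nodup_append hnd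
  have hvA : v ∉ A := fun hv => hdisj hv List.mem_cons_self
  -- count facts
  have hcnt : ∀ u : V, k = P.count u + (v :: Q).count u := by
    intro u; rw [← hcount u, h1, List.count_append]
  have hQv : Q.count v = 0 := List.count_eq_zero_of_not_mem h2
  have hPv : P.count v + 1 = k := by
    have := hcnt v; simp [List.count_cons, hQv] at this; omega
  have hkey : ∀ u : V, (P.count u : ℤ) ≤ ((k : ℤ) - 1) + (A.count u : ℤ) := by
    intro u
    rcases eq_or_ne u v with h | h
    · subst h
      rw [List.count_eq_zero_of_not_mem hvA]
      push_cast; omega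
    · by_cases hA : u ∈ A
      · rw [List.count_eq_one_of_mem hndA hA]
        have : P.count u ≤ k := by have := hcnt u; omega
        push_cast; omega
      · -- u ∈ B = Q.dedup hence u ∈ Q
        have huB : u ∈ B := by
          have : u ∈ A ++ v :: B := by rw [← hsplit]; exact hmemD u
          simp at this
          rcases this with h' | h' | h'
          · exact absurd h' hA
          · exact absurd h' h
          · exact h'
        have huQ : u ∈ Q := by rw [← h3] at huB; exact List.mem_dedup.mp huB
        have h1Q : 1 ≤ Q.count u := List.count_pos_iff.mpr huQ
        have : P.count u + 1 ≤ k := by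
          have := hcnt u
          rw [List.count_cons] at this
          simp [h] at this
          omega
        rw [List.count_eq_zero_of_not_mem hA]
        push_cast; omega
  -- the sum inequality
  have hdeg : (mgDeg m v : ℤ) = ∑ u, (m u v : ℤ) := by
    rw [mgDeg]; push_cast
    exact Finset.sum_congr rfl fun u _ => by rw [hsymm v u]
  have hsum : ∑ u, (P.count u : ℤ) * m u v
      ≤ ((k : ℤ) - 1) * (∑ u, (m u v : ℤ)) + ∑ u, (A.count u : ℤ) * m u v := by
    rw [Finset.mul_sum, ← Finset.sum_add_distrib]
    refine Finset.sum_le_sum fun u _ => ?_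
    have := mul_le_mul_of_nonneg_right (hkey u) (by positivity : (0:ℤ) ≤ (m u v : ℤ))
    linarith [this]
  -- legality of L at v's last firing
  have hlegv : (mgDeg m v : ℤ) ≤ mgPlay m f P v := by
    apply mgLegal_split
    rw [← h1]; exact hL
  rw [mgPlay_apply m hloop] at hlegv ⊢
  have hPvZ : (P.count v : ℤ) = (k : ℤ) - 1 := by push_cast; omega
  have hAvZ : (A.count v : ℤ) = 0 := by
    rw [List.count_eq_zero_of_not_mem hvA]; simp
  rw [hPvZ] at hlegv
  rw [hAvZ]
  have hk1 : (1 : ℤ) ≤ (k : ℤ) := by exact_mod_cast hk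
  nlinarith [hsum, hlegv, hdeg]
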